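/- Let X_{1,1} be the n×n lower-triangular matrix of all ones (1 on the diagonal and on every subdiagonal). Then its spectral norm equals 1/(2 sin(π/(4n+2))). -/

import Mathlib

open scoped Matrix.Norms.L2Operator
open Real Finset Matrix

noncomputable def Xmat (n : ℕ) (r beta : ℝ) : Matrix (Fin n) (Fin n) ℝ :=
  Matrix.of fun i j =>
    if (i : ℕ) < (j : ℕ) then 0
    else if i = j then r ^ (n - 1)
    else beta * r ^ (n - ((i : ℕ) - (j : ℕ) + 1))

lemma tele_cos (θ : ℝ) (m : ℕ) :
    ∑ k ∈ range m, 2 * sin θ * cos ((2 * k + 1) * θ) = sin (2 * m * θ) := by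
  induction m with
  | zero => simp
  | succ m ih =>
    rw [Finset.sum_range_succ, ih]
    have h1 : sin ((2 * (m:ℝ) + 1) * θ + θ) - sin ((2 * (m:ℝ) + 1) * θ - θ)
        = 2 * sin θ * cos ((2 * (m:ℝ) + 1) * θ) := by
      rw [sin_add, sin_sub]; ring
    have e1 : (2 * (m:ℝ) + 1) * θ + θ = 2 * ((m:ℕ)+1 : ℝ) * θ := by ring
    have e2 : (2 * (m:ℝ) + 1) * θ - θ = 2 * (m:ℝ) * θ := by ring
    push_cast
    push_cast [e1, e2] at h1
    linarith [h1]

lemma tele_sin (θ : ℝ) (m : ℕ) :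
    ∑ k ∈ range m, 2 * sin θ * sin ((2 * k + 2) * θ) = cos θ - cos ((2 * m + 1) * θ) := by
  induction m with
  | zero => simp
  | succ m ih =>
    rw [Finset.sum_range_succ, ih]
    have h1 : cos ((2 * (m:ℝ) + 2) * θ - θ) - cos ((2 * (m:ℝ) + 2) * θ + θ)
        = 2 * sin θ * sin ((2 * (m:ℝ) + 2) * θ) := by
      rw [cos_add, cos_sub]; ring
    have e1 : (2 * (m:ℝ) + 2) * θ + θ = (2 * ((m:ℕ)+1 : ℝ) + 1) * θ := by ring
    have e2 : (2 * (m:ℝ) + 2) * θ - θ = (2 * (m:ℝ) + 1) * θ := by ring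
    push_cast
    push_cast [e1, e2] at h1
    linarith [h1]

lemma wirtinger (n : ℕ) (hn : 1 ≤ n) (w z : ℕ → ℝ) (lam : ℝ)
    (hw : ∀ k ≤ n, 0 < w k)
    (hrec : ∀ k, k + 2 ≤ n → w (k + 2) = (2 - lam) * w (k + 1) - w k)
    (hrec0 : w 1 = (2 - lam) * w 0)
    (hlast : w n = w (n - 1)) :
    lam * ∑ k ∈ range n, z k ^ 2 ≤ z 0 ^ 2 + ∑ k ∈ range (n - 1), (z (k + 1) - z k) ^ 2 := by
  set q : ℕ → ℝ := fun k => (w (k+1) * z k - w k * z (k+1)) ^ 2 / (w k * w (k+1)) with hq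
  have key : ∀ m, 1 ≤ m → m ≤ n →
      z 0 ^ 2 + ∑ k ∈ range (m - 1), (z (k + 1) - z k) ^ 2
        = lam * ∑ k ∈ range m, z k ^ 2 + ∑ k ∈ range (m - 1), q k
          + (w m / w (m - 1) - 1) * z (m - 1) ^ 2 := by
    intro m hm
    induction m with
    | zero => omega
    | succ m ih =>
      intro hmn
      rcases Nat.eq_or_lt_of_le hm with h1 | h1
      · -- m+1 = 1, i.e. m = 0
        have : m = 0 := by omega
        subst this
        have hw0 : 0 < w 0 := hw 0 (by omega)
        norm_num [Finset.sum_range_one]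
        rw [hrec0]
        field_simp
        ring
      · have hm1 : 1 ≤ m := by omega
        have ihm := ih hm1 (by omega)
        obtain ⟨a, rfl⟩ : ∃ a, m = a + 1 := ⟨m - 1, by omega⟩
        have hwa : 0 < w a := hw a (by omega)
        have hwb : 0 < w (a + 1) := hw (a + 1) (by omega)
        have hr : w (a + 2) = (2 - lam) * w (a + 1) - w a := hrec a (by omega)
        have e1 : a + 1 + 1 - 1 = a + 1 := by omega
        have e2 : a + 1 - 1 = a := by omega
        rw [e1]
        rw [e2] at ihm
        rw [Finset.sum_range_succ, Finset.sum_range_succ (f := fun k => z k ^ 2),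
          Finset.sum_range_succ (f := q)]
        rw [show z 0 ^ 2 + (∑ k ∈ range a, (z (k + 1) - z k) ^ 2 + (z (a + 1) - z a) ^ 2)
            = (z 0 ^ 2 + ∑ k ∈ range a, (z (k + 1) - z k) ^ 2) + (z (a + 1) - z a) ^ 2 by ring,
          ihm]
        simp only [hq, hr]
        field_simp
        ring
  have hkey := key n hn le_rfl
  have hq0 : ∀ k ∈ range (n - 1), 0 ≤ q k := by
    intro k hk
    have hk' : k + 1 ≤ n := by simp at hk; omega
    have := hw k (by omega)
    have := hw (k+1) hk'
    exact div_nonneg (sq_nonneg _) (by positivity)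
  have hrem : (w n / w (n - 1) - 1) * z (n - 1) ^ 2 = 0 := by
    rw [hlast, div_self (ne_of_gt (hw (n-1) (by omega)))]; ring
  have hsum : 0 ≤ ∑ k ∈ range (n - 1), q k := Finset.sum_nonneg hq0
  linarith [hkey, hsum, hrem.le, hrem.ge]

lemma Xmat_apply (n : ℕ) (i j : Fin n) :
    Xmat n 1 1 i j = if (i : ℕ) < (j : ℕ) then 0 else 1 := by
  simp only [Xmat, Matrix.of_apply, one_pow, one_mul]
  split_ifs <;> rfl

lemma Xmat_mulVec (n : ℕ) (f : ℕ → ℝ) (i : Fin n) :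
    (Xmat n 1 1 *ᵥ fun j : Fin n => f j) i = ∑ k ∈ range ((i : ℕ) + 1), f k := by
  have : (Xmat n 1 1 *ᵥ fun j : Fin n => f j) i
      = ∑ j : Fin n, (if (i : ℕ) < (j : ℕ) then (0:ℝ) else 1) * f j := by
    simp only [Matrix.mulVec, dotProduct]
    exact Finset.sum_congr rfl fun j _ => by rw [Xmat_apply]
  rw [this, Fin.sum_univ_eq_sum_range (fun k => (if (i : ℕ) < k then (0:ℝ) else 1) * f k) n]
  rw [← Finset.sum_range_add_sum_Ico _ (show (i : ℕ) + 1 ≤ n from i.isLt)]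
  have h1 : ∑ k ∈ Finset.Ico ((i:ℕ)+1) n, (if (i : ℕ) < k then (0:ℝ) else 1) * f k = 0 := by
    apply Finset.sum_eq_zero
    intro k hk
    rw [Finset.mem_Ico] at hk
    rw [if_pos (by omega)]
    ring
  rw [h1, add_zero]
  apply Finset.sum_congr rfl
  intro k hk
  rw [Finset.mem_range] at hk
  rw [if_neg (by omega)]
  ring

lemma XmatT_mulVec (n : ℕ) (f : ℕ → ℝ) (j : Fin n) :
    ((Xmat n 1 1)ᵀ *ᵥ fun i : Fin n => f i) j = ∑ k ∈ Finset.Ico (j : ℕ) n, f k := by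
  have : ((Xmat n 1 1)ᵀ *ᵥ fun i : Fin n => f i) j
      = ∑ i : Fin n, (if (i : ℕ) < (j : ℕ) then (0:ℝ) else 1) * f i := by
    simp only [Matrix.mulVec, dotProduct, Matrix.transpose_apply]
    exact Finset.sum_congr rfl fun i _ => by rw [Xmat_apply]
  rw [this, Fin.sum_univ_eq_sum_range (fun k => (if k < (j : ℕ) then (0:ℝ) else 1) * f k) n]
  rw [← Finset.sum_range_add_sum_Ico _ (show (j : ℕ) ≤ n from j.isLt.le)]
  have h1 : ∑ k ∈ Finset.range (j:ℕ), (if k < (j : ℕ) then (0:ℝ) else 1) * f k = 0 := by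
    apply Finset.sum_eq_zero
    intro k hk
    rw [Finset.mem_range] at hk
    rw [if_pos hk]
    ring
  rw [h1, zero_add]
  apply Finset.sum_congr rfl
  intro k hk
  rw [Finset.mem_Ico] at hk
  rw [if_neg (by omega)]
  ring

/-- The spectral norm of the lower-triangular all-ones matrix is
`1/(2 sin(π/(4n+2)))`. -/
theorem stmt16 (n : ℕ) (hn : 1 ≤ n) :
    ‖Xmat n 1 1‖ = 1 / (2 * Real.sin (Real.pi / (4 * n + 2))) := by
  have hn' : (1:ℝ) ≤ (n:ℝ) := by exact_mod_cast hn
  set θ : ℝ := Real.pi / (4 * (n:ℝ) + 2) with hθdef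
  set c : ℝ := 1 / (2 * Real.sin θ) with hcdef
  have hden : (0:ℝ) < 4 * (n:ℝ) + 2 := by positivity
  have hθpos : 0 < θ := div_pos Real.pi_pos hden
  have hhalf : (2 * (n:ℝ) + 1) * θ = Real.pi / 2 := by
    rw [hθdef]; field_simp; ring
  have hθlt : θ < Real.pi / 2 := by nlinarith [Real.pi_pos]
  have hsin : 0 < Real.sin θ :=
    Real.sin_pos_of_pos_of_lt_pi hθpos (by linarith [Real.pi_pos])
  have h2s : (2 * Real.sin θ) ≠ 0 := by positivity
  have hc : 0 < c := by rw [hcdef]; positivity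
  set V : ℕ → ℝ := fun k => Real.cos ((2 * (k:ℝ) + 1) * θ) with hVdef
  set U : ℕ → ℝ := fun k => Real.sin ((2 * (k:ℝ) + 2) * θ) with hUdef
  -- X v = c u
  have hXv : ∀ i : Fin n, (Xmat n 1 1 *ᵥ fun j : Fin n => V j) i = c * U i := by
    intro i
    rw [Xmat_mulVec]
    have t := tele_cos θ ((i:ℕ) + 1)
    rw [← Finset.mul_sum] at t
    have e : 2 * ((((i:ℕ) + 1 : ℕ)):ℝ) * θ = (2 * ((i:ℕ):ℝ) + 2) * θ := by push_cast; ring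
    rw [e] at t
    rw [hcdef, hUdef]
    field_simp
    rw [show 2 * (((i:ℕ):ℝ) + 1) * θ = (2 * ((i:ℕ):ℝ) + 2) * θ by ring]
    simp only [hVdef]
    linarith [t]
  -- Xᵀ u = c v
  have hXTu : ∀ j : Fin n, ((Xmat n 1 1)ᵀ *ᵥ fun i : Fin n => U i) j = c * V j := by
    intro j
    rw [XmatT_mulVec]
    rw [Finset.sum_Ico_eq_sub _ (j.isLt.le)]
    have tn := tele_sin θ n
    have tj := tele_sin θ (j:ℕ)
    rw [← Finset.mul_sum] at tn tj
    have hz : Real.cos ((2 * ((n:ℕ):ℝ) + 1) * θ) = 0 := by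
      rw [hhalf]; exact Real.cos_pi_div_two
    rw [hz] at tn
    rw [hcdef, hVdef]
    field_simp
    nlinarith [tn, tj]
  -- equality of norms of u and v
  have hsumeq : ∑ j : Fin n, V j ^ 2 = ∑ i : Fin n, U i ^ 2 := by
    have h1 : (fun i : Fin n => U i) ⬝ᵥ (Xmat n 1 1 *ᵥ fun j : Fin n => V j)
        = c * ∑ i : Fin n, U i ^ 2 := by
      simp only [dotProduct, hXv, Finset.mul_sum]
      exact Finset.sum_congr rfl fun i _ => by ring
    have h2 : (fun i : Fin n => U i) ⬝ᵥ (Xmat n 1 1 *ᵥ fun j : Fin n => V j)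
        = c * ∑ j : Fin n, V j ^ 2 := by
      rw [Matrix.dotProduct_mulVec, ← Matrix.mulVec_transpose]
      simp only [dotProduct, hXTu, Finset.mul_sum]
      exact Finset.sum_congr rfl fun j _ => by ring
    have := h1.symm.trans h2
    exact (mul_left_cancel₀ (ne_of_gt hc) this).symm
  -- lower bound
  have hsumVpos : 0 < ∑ j : Fin n, V j ^ 2 := by
    apply Finset.sum_pos' (fun j _ => sq_nonneg _)
    refine ⟨⟨0, hn⟩, Finset.mem_univ _, ?_⟩
    have h0 : V ((⟨0, hn⟩ : Fin n) : ℕ) = Real.cos θ := by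
      rw [hVdef]; norm_num
    rw [h0]
    have : 0 < Real.cos θ := Real.cos_pos_of_mem_Ioo ⟨by linarith, hθlt⟩
    positivity
  set v' : EuclideanSpace ℝ (Fin n) := WithLp.toLp 2 (fun j : Fin n => V j) with hv'
  have hnormv : ‖v'‖ = Real.sqrt (∑ j : Fin n, V j ^ 2) := by
    rw [EuclideanSpace.norm_eq]
    congr 1
    exact Finset.sum_congr rfl fun j _ => by rw [Real.norm_eq_abs, sq_abs]
  have hlow : c ≤ ‖Xmat n 1 1‖ := by
    have hb := Matrix.l2_opNorm_mulVec (Xmat n 1 1) v'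
    have hXvnorm : ‖(EuclideanSpace.equiv (Fin n) ℝ).symm (Xmat n 1 1 *ᵥ v')‖
        = c * Real.sqrt (∑ j : Fin n, V j ^ 2) := by
      rw [EuclideanSpace.norm_eq]
      have hcomp : ∑ i : Fin n, ‖((EuclideanSpace.equiv (Fin n) ℝ).symm (Xmat n 1 1 *ᵥ v')) i‖ ^ 2
          = c ^ 2 * ∑ i : Fin n, U i ^ 2 := by
        rw [Finset.mul_sum]
        refine Finset.sum_congr rfl fun i _ => ?_
        rw [Real.norm_eq_abs, sq_abs,
          show ((EuclideanSpace.equiv (Fin n) ℝ).symm (Xmat n 1 1 *ᵥ v')) i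
            = (Xmat n 1 1 *ᵥ fun j : Fin n => V j) i from rfl, hXv i]
        ring
      rw [hcomp, ← hsumeq, Real.sqrt_mul (sq_nonneg c), Real.sqrt_sq hc.le]
    rw [hXvnorm, hnormv] at hb
    have hsq : 0 < Real.sqrt (∑ j : Fin n, V j ^ 2) := Real.sqrt_pos.mpr hsumVpos
    exact le_of_mul_le_mul_right hb hsq
  -- upper bound
  have hlam : 0 < 4 * Real.sin θ ^ 2 := by positivity
  have hcos2 : Real.cos (2 * θ) = 1 - 2 * Real.sin θ ^ 2 := by
    rw [Real.cos_two_mul]; nlinarith [Real.sin_sq_add_cos_sq θ]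
  have hUpos : ∀ k, k ≤ n → 0 < U k := by
    intro k hk
    rw [hUdef]
    apply Real.sin_pos_of_pos_of_lt_pi
    · positivity
    · have hk' : (k:ℝ) ≤ (n:ℝ) := by exact_mod_cast hk
      have h1 : (2 * (k:ℝ) + 2) * θ ≤ (2 * (n:ℝ) + 2) * θ := by nlinarith
      have h2 : (2 * (n:ℝ) + 2) * θ = (2 * (n:ℝ) + 1) * θ + θ := by ring
      rw [hhalf] at h2
      linarith
  have hrec : ∀ k : ℕ, U (k + 2) = (2 - 4 * Real.sin θ ^ 2) * U (k + 1) - U k := by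
    intro k
    simp only [hUdef]
    push_cast
    have ha : (2 * ((k:ℝ) + 2) + 2) * θ = (2 * ((k:ℝ) + 1) + 2) * θ + 2 * θ := by ring
    have hb : (2 * (k:ℝ) + 2) * θ = (2 * ((k:ℝ) + 1) + 2) * θ - 2 * θ := by ring
    rw [ha, hb, Real.sin_add, Real.sin_sub, hcos2]
    ring
  have hrec0 : U 1 = (2 - 4 * Real.sin θ ^ 2) * U 0 := by
    simp only [hUdef]
    push_cast
    have ha : (2 * (1:ℝ) + 2) * θ = 2 * (2 * θ) := by ring
    have hb : (2 * (0:ℝ) + 2) * θ = 2 * θ := by ring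
    rw [ha, hb, Real.sin_two_mul, hcos2]
    ring
  have hlast : U n = U (n - 1) := by
    simp only [hUdef]
    have hc1 : ((n - 1 : ℕ) : ℝ) = (n:ℝ) - 1 := by
      rw [Nat.cast_sub hn]; norm_num
    rw [hc1]
    have e1 : (2 * (n:ℝ) + 2) * θ = (2 * (n:ℝ) + 1) * θ + θ := by ring
    have e2 : (2 * ((n:ℝ) - 1) + 2) * θ = (2 * (n:ℝ) + 1) * θ - θ := by ring
    rw [e1, e2, hhalf, Real.sin_add, Real.sin_sub]
    simp
  have hup : ‖Xmat n 1 1‖ ≤ c := by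
    rw [Matrix.l2_opNorm_def]
    refine ContinuousLinearMap.opNorm_le_bound _ hc.le fun x => ?_
    show ‖(WithLp.equiv 2 (Fin n → ℝ)).symm
        (Xmat n 1 1 *ᵥ (WithLp.equiv 2 (Fin n → ℝ)) x)‖ ≤ c * ‖x‖
    set y : Fin n → ℝ := (WithLp.equiv 2 (Fin n → ℝ)) x with hy
    set xx : ℕ → ℝ := fun k => if h : k < n then y ⟨k, h⟩ else 0 with hxx
    set z : ℕ → ℝ := fun k => ∑ j ∈ range (k + 1), xx j with hzdef
    have hyfun : y = fun j : Fin n => xx (j : ℕ) := by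
      funext j
      rw [hxx]
      simp [j.isLt]
    have hzi : ∀ i : Fin n, (Xmat n 1 1 *ᵥ y) i = z (i : ℕ) := by
      intro i
      rw [hyfun, Xmat_mulVec]
    have hwirt := wirtinger n hn U z (4 * Real.sin θ ^ 2) hUpos
      (fun k _ => hrec k) hrec0 hlast
    have hRH : z 0 ^ 2 + ∑ k ∈ range (n - 1), (z (k + 1) - z k) ^ 2
        = ∑ k ∈ range n, xx k ^ 2 := by
      have h0 : z 0 = xx 0 := by rw [hzdef]; simp
      have hstep : ∀ k, z (k + 1) - z k = xx (k + 1) := by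
        intro k
        rw [hzdef]
        simp only [Finset.sum_range_succ]
        ring
      obtain ⟨m, rfl⟩ : ∃ m, n = m + 1 := ⟨n - 1, by omega⟩
      rw [Finset.sum_range_succ' (fun k => xx k ^ 2) m]
      simp only [Nat.add_sub_cancel]
      rw [h0, add_comm]
      congr 1
      exact Finset.sum_congr rfl fun k _ => by rw [hstep k]
    rw [hRH] at hwirt
    have hxnorm : ‖x‖ = Real.sqrt (∑ k ∈ range n, xx k ^ 2) := by
      rw [EuclideanSpace.norm_eq]
      congr 1
      rw [← Fin.sum_univ_eq_sum_range (fun k => xx k ^ 2) n]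
      refine Finset.sum_congr rfl fun i _ => ?_
      rw [Real.norm_eq_abs, sq_abs]
      have : x i = xx (i : ℕ) := by
        rw [show x i = y i from rfl, hyfun]
      rw [this]
    have hXxnorm : ‖(WithLp.equiv 2 (Fin n → ℝ)).symm (Xmat n 1 1 *ᵥ y)‖
        = Real.sqrt (∑ k ∈ range n, z k ^ 2) := by
      rw [EuclideanSpace.norm_eq]
      congr 1
      rw [← Fin.sum_univ_eq_sum_range (fun k => z k ^ 2) n]
      refine Finset.sum_congr rfl fun i _ => ?_
      rw [Real.norm_eq_abs, sq_abs,
        show ((WithLp.equiv 2 (Fin n → ℝ)).symm (Xmat n 1 1 *ᵥ y)) i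
          = (Xmat n 1 1 *ᵥ y) i from rfl, hzi i]
    rw [hXxnorm, hxnorm]
    have hcsq : c ^ 2 * (4 * Real.sin θ ^ 2) = 1 := by
      rw [hcdef]
      field_simp
      ring
    have hkey : ∑ k ∈ range n, z k ^ 2 ≤ c ^ 2 * ∑ k ∈ range n, xx k ^ 2 := by
      have h2 := mul_le_mul_of_nonneg_left hwirt (sq_nonneg c)
      have h1 : c ^ 2 * (4 * Real.sin θ ^ 2 * ∑ k ∈ range n, z k ^ 2)
          = ∑ k ∈ range n, z k ^ 2 := by
        rw [← mul_assoc, hcsq, one_mul]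
      linarith
    calc Real.sqrt (∑ k ∈ range n, z k ^ 2)
        ≤ Real.sqrt (c ^ 2 * ∑ k ∈ range n, xx k ^ 2) := Real.sqrt_le_sqrt hkey
      _ = c * Real.sqrt (∑ k ∈ range n, xx k ^ 2) := by
          rw [Real.sqrt_mul (sq_nonneg c), Real.sqrt_sq hc.le]
  exact le_antisymm hup hlow
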